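/- The infinite series ∑_{k=0}^∞ k! / (2k+1)!! equals π/2, where (2k+1)!! = (2k+1)!/(2^k k!). -/

import Mathlib

open Real MeasureTheory intervalIntegral

noncomputable def poch (x : ℝ) (k : ℕ) : ℝ := ∏ i ∈ Finset.range k, (x + i)

noncomputable def H2 (n : ℕ) : ℝ := ∑ i ∈ Finset.range n, 1 / ((i : ℝ) + 1) ^ 2

noncomputable def oddDoubleFact (k : ℕ) : ℝ := ((2 * k + 1).factorial : ℝ) / (2 ^ k * k.factorial)

lemma aux_prod (k : ℕ) : ∀ m : ℕ, (k.factorial : ℂ) * ∏ j ∈ Finset.range m, ((k : ℂ) + 1 + j) =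
    ((k + m).factorial : ℂ) := by
  intro m
  induction m with
  | zero => simp
  | succ n ih =>
    rw [Finset.prod_range_succ, ← mul_assoc, ih]
    push_cast [← Nat.add_assoc, Nat.factorial_succ]
    ring

lemma I_eq (k : ℕ) : ∫ x in (0:ℝ)..1, x ^ k * (1 - x) ^ k =
    (k.factorial * k.factorial : ℝ) / ((2 * k + 1).factorial) := by
  have hu : 0 < Complex.re ((k : ℂ) + 1) := by
    simp only [Complex.add_re, Complex.natCast_re, Complex.one_re]
    positivity
  have hb := Complex.betaIntegral_eval_nat_add_one_right hu k
  rw [Complex.betaIntegral] at hb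
  have hint : (∫ x in (0:ℝ)..1, ((x : ℂ)) ^ ((k : ℂ) + 1 - 1) * ((1 : ℂ) - x) ^ ((k : ℂ) + 1 - 1))
      = ((∫ x in (0:ℝ)..1, x ^ k * (1 - x) ^ k : ℝ) : ℂ) := by
    rw [← intervalIntegral.integral_ofReal]
    apply intervalIntegral.integral_congr
    intro x _
    have : (k : ℂ) + 1 - 1 = ((k : ℕ) : ℂ) := by ring
    simp only [this, Complex.cpow_natCast]
    push_cast
    ring
  rw [hint] at hb
  have hprod := aux_prod k (k + 1)
  have hp : (∏ j ∈ Finset.range (k + 1), ((k : ℂ) + 1 + j)) =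
      ((2 * k + 1).factorial : ℂ) / (k.factorial : ℂ) := by
    have hk : (k.factorial : ℂ) ≠ 0 := by exact_mod_cast k.factorial_ne_zero
    field_simp
    rw [mul_comm] at hprod
    rw [hprod]
    norm_num [two_mul, Nat.add_assoc]
  rw [hp] at hb
  have hk : (k.factorial : ℂ) ≠ 0 := by exact_mod_cast k.factorial_ne_zero
  have hf : ((2 * k + 1).factorial : ℂ) ≠ 0 := by exact_mod_cast (2 * k + 1).factorial_ne_zero
  have : ((∫ x in (0:ℝ)..1, x ^ k * (1 - x) ^ k : ℝ) : ℂ) =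
      ((k.factorial * k.factorial : ℝ) / ((2 * k + 1).factorial) : ℝ) := by
    rw [hb]
    push_cast
    field_simp
  exact_mod_cast this

theorem stmt3 :
    ∑' k : ℕ, (k.factorial : ℝ) / oddDoubleFact k = π / 2 := by
  -- Step 1: rewrite each term as an integral
  have hterm : ∀ k : ℕ, (k.factorial : ℝ) / oddDoubleFact k =
      ∫ x in Set.Ioc (0:ℝ) 1, (2 * x * (1 - x)) ^ k := by
    intro k
    have h1 : ∫ x in Set.Ioc (0:ℝ) 1, (2 * x * (1 - x)) ^ k
        = ∫ x in (0:ℝ)..1, (2 * x * (1 - x)) ^ k := by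
      rw [intervalIntegral.integral_of_le (by norm_num)]
    have h2 : ∫ x in (0:ℝ)..1, (2 * x * (1 - x)) ^ k
        = 2 ^ k * ∫ x in (0:ℝ)..1, x ^ k * (1 - x) ^ k := by
      rw [← intervalIntegral.integral_const_mul]
      apply intervalIntegral.integral_congr
      intro x _
      show (2 * x * (1 - x)) ^ k = 2 ^ k * (x ^ k * (1 - x) ^ k)
      rw [mul_pow, mul_pow]
      ring
    rw [h1, h2, I_eq, oddDoubleFact]
    have hk : (k.factorial : ℝ) ≠ 0 := by exact_mod_cast k.factorial_ne_zero
    have hf : ((2 * k + 1).factorial : ℝ) ≠ 0 := by exact_mod_cast (2 * k + 1).factorial_ne_zero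
    field_simp
  simp only [hterm]
  -- Step 2: key bounds on 2x(1-x)
  have hbd : ∀ x ∈ Set.Ioc (0:ℝ) 1, 0 ≤ 2 * x * (1 - x) ∧ 2 * x * (1 - x) ≤ 1 / 2 := by
    intro x hx
    obtain ⟨h0, h1⟩ := hx
    constructor
    · nlinarith
    · nlinarith [sq_nonneg (x - 1/2)]
  -- Step 3: swap sum and integral
  have hcont : ∀ k : ℕ, Continuous (fun x : ℝ => (2 * x * (1 - x)) ^ k) := by
    intro k; fun_prop
  have hint : ∀ k : ℕ, Integrable (fun x : ℝ => (2 * x * (1 - x)) ^ k)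
      (volume.restrict (Set.Ioc 0 1)) := by
    intro k
    exact (hcont k).integrableOn_Ioc
  have hswap : ∑' k : ℕ, ∫ x in Set.Ioc (0:ℝ) 1, (2 * x * (1 - x)) ^ k
      = ∫ x in Set.Ioc (0:ℝ) 1, ∑' k : ℕ, (2 * x * (1 - x)) ^ k := by
    apply MeasureTheory.integral_tsum_of_summable_integral_norm
    · intro k; exact (hcont k).integrableOn_Ioc
    · apply Summable.of_nonneg_of_le (fun k => integral_nonneg (fun x => norm_nonneg _))
        (fun k => ?_) (summable_geometric_of_lt_one (by norm_num) (by norm_num) : Summable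
          fun k : ℕ => (1/2 : ℝ) ^ k)
      calc ∫ x in Set.Ioc (0:ℝ) 1, ‖(2 * x * (1 - x)) ^ k‖
          ≤ ∫ _x in Set.Ioc (0:ℝ) 1, (1/2 : ℝ) ^ k := by
            apply integral_mono_of_nonneg
            · filter_upwards with x using norm_nonneg _
            · exact integrable_const _
            · filter_upwards [ae_restrict_mem measurableSet_Ioc] with x hx
              obtain ⟨h0, h1⟩ := hbd x hx
              rw [norm_pow, Real.norm_of_nonneg h0]
              exact pow_le_pow_left₀ h0 h1 k
        _ = (1/2 : ℝ) ^ k := by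
            simp [Real.volume_Ioc]
  rw [hswap]
  -- Step 4: evaluate geometric series pointwise
  have hgeo : ∫ x in Set.Ioc (0:ℝ) 1, ∑' k : ℕ, (2 * x * (1 - x)) ^ k
      = ∫ x in Set.Ioc (0:ℝ) 1, (1 - 2 * x * (1 - x))⁻¹ := by
    apply MeasureTheory.setIntegral_congr_fun measurableSet_Ioc
    intro x hx
    obtain ⟨h0, h1⟩ := hbd x hx
    exact tsum_geometric_of_lt_one h0 (by linarith)
  rw [hgeo]
  -- Step 5: compute the integral
  have h5 : ∫ x in Set.Ioc (0:ℝ) 1, (1 - 2 * x * (1 - x))⁻¹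
      = ∫ x in (0:ℝ)..1, (1 - 2 * x * (1 - x))⁻¹ := by
    rw [intervalIntegral.integral_of_le (by norm_num)]
  rw [h5]
  have h6 : ∀ x : ℝ, (1 - 2 * x * (1 - x))⁻¹ = 2 * (1 + (2 * x + (-1)) ^ 2)⁻¹ := by
    intro x
    have : 1 + (2 * x + (-1)) ^ 2 = 2 * (1 - 2 * x * (1 - x)) := by ring
    rw [this, mul_inv]
    have h2 : (1 : ℝ) - 2 * x * (1 - x) > 0 := by nlinarith [sq_nonneg (2*x - 1)]
    field_simp
  simp only [h6]
  rw [intervalIntegral.integral_const_mul]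
  have h7 : (∫ x in (0:ℝ)..1, (1 + (2 * x + (-1)) ^ 2)⁻¹)
      = (2:ℝ)⁻¹ • ∫ u in (2*0 + (-1) : ℝ)..(2*1 + (-1) : ℝ), (1 + u ^ 2)⁻¹ := by
    exact intervalIntegral.integral_comp_mul_add (fun u => (1 + u ^ 2)⁻¹) two_ne_zero (-1)
  rw [h7, show (2*0 + (-1):ℝ) = -1 by norm_num, show (2*1 + (-1):ℝ) = 1 by norm_num]
  have h8 : (∫ u in (-1:ℝ)..1, (1 + u ^ 2)⁻¹) = π / 2 := by
    simp only [← one_div]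
    rw [integral_one_div_one_add_sq, Real.arctan_one,
      show (-1:ℝ) = -(1:ℝ) by norm_num, Real.arctan_neg, Real.arctan_one]
    ring
  rw [h8, smul_eq_mul]
  ring
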